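/- Let X be a compact metrizable space, let 𝒞 be a null collection of two-point subsets of X (i.e., for every ε > 0 only finitely many members of 𝒞 have diameter ≥ ε with respect to any fixed compatible metric), let C₀ = {a,b} ∈ 𝒞, and let K > 0. Then there exists a metric d on X compatible with the topology of X such that diam(X) = K = d(a,b) and diam(C) ≤ K/2 for every C ∈ 𝒞 with C ≠ C₀. -/

import Mathlib

open Set Metric

private lemma pairs_finite {X : Type*} [MetricSpace X] (𝒞 : Set (Set X))
    (h2 : ∀ C ∈ 𝒞, C.ncard = 2)
    (hnull : ∀ ε > (0:ℝ), {C | C ∈ 𝒞 ∧ ε ≤ Metric.diam C}.Finite)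
    {t : ℝ} (ht : 0 < t) :
    {p : X × X | {p.1, p.2} ∈ 𝒞 ∧ t ≤ dist p.1 p.2}.Finite := by
  have hfin := hnull t ht
  refine Set.Finite.subset
      (hfin.biUnion (fun C hC =>
        ((Set.finite_of_ncard_ne_zero (by rw [h2 C hC.1]; norm_num)).prod
          (Set.finite_of_ncard_ne_zero (by rw [h2 C hC.1]; norm_num))))) ?_
  rintro ⟨x, y⟩ ⟨hmem, hdist⟩
  refine Set.mem_biUnion (show {x, y} ∈ _ from ⟨hmem, ?_⟩) ?_
  · rwa [Metric.diam_pair]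
  · exact ⟨by simp, by simp⟩

private lemma exists_f {X : Type*} [MetricSpace X] (𝒞 : Set (Set X))
    (h2 : ∀ C ∈ 𝒞, C.ncard = 2)
    (hnull : ∀ ε > (0:ℝ), {C | C ∈ 𝒞 ∧ ε ≤ Metric.diam C}.Finite)
    (a b : X) (hab : a ≠ b) :
    ∃ (f : X → ℝ) (L : ℝ), 0 < L ∧
      (∀ x, 0 ≤ f x ∧ f x ≤ 1) ∧ f a = 0 ∧ f b = 1 ∧
      (∀ x y, |f x - f y| ≤ L * dist x y) ∧
      (∀ x y, ({x, y} : Set X) ∈ 𝒞 → ({x, y} : Set X) ≠ {a, b} →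
        |f x - f y| ≤ 1 / 2) := by
  set D := dist a b with hDdef
  have hD : 0 < D := dist_pos.2 hab
  -- the finite set of "bad" pairs near (a, b)
  set S₁ : Set (X × X) :=
    {p : X × X | {p.1, p.2} ∈ 𝒞 ∧ ({p.1, p.2} : Set X) ≠ {a, b} ∧
      dist a p.1 + dist p.2 b ≤ D / 4} with hS₁def
  have hS₁fin : S₁.Finite := by
    refine (pairs_finite 𝒞 h2 hnull (t := D / 2) (by linarith)).subset ?_
    rintro ⟨x, y⟩ ⟨hmem, _, hle⟩
    refine ⟨hmem, ?_⟩
    have h1 := dist_triangle a x y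
    have h2' := dist_triangle a y b
    have h3 := dist_comm x y
    simp only [hDdef] at hle ⊢
    linarith
  set V : Set ℝ := insert (D / 4) ((fun p : X × X => dist a p.1 + dist p.2 b) '' S₁)
    with hVdef
  have hVfin : V.Finite := (hS₁fin.image _).insert _
  have hVne : V.Nonempty := ⟨D / 4, Set.mem_insert _ _⟩
  set m' := sInf V with hm'def
  have hm'mem : m' ∈ V := hVne.csInf_mem hVfin
  have hm'pos : 0 < m' := by
    rcases Set.mem_insert_iff.1 hm'mem with h | ⟨p, hp, hpe⟩
    · rw [h]; linarith
    · rw [← hpe]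
      rcases lt_or_ge 0 (dist a p.1 + dist p.2 b) with h | h
      · exact h
      · exfalso
        have h1 : dist a p.1 = 0 := le_antisymm (by linarith [dist_nonneg (x := p.2) (y := b)]) dist_nonneg
        have h2' : dist p.2 b = 0 := le_antisymm (by linarith [dist_nonneg (x := a) (y := p.1)]) dist_nonneg
        have e1 : p.1 = a := (dist_eq_zero.1 (by rwa [dist_comm] at h1))
        have e2 : p.2 = b := dist_eq_zero.1 h2'
        exact hp.2.1 (by rw [e1, e2])
  have hm'key : ∀ p : X × X, {p.1, p.2} ∈ 𝒞 → ({p.1, p.2} : Set X) ≠ {a, b} →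
      m' ≤ dist a p.1 + dist p.2 b := by
    intro p hmem hne
    by_cases h : dist a p.1 + dist p.2 b ≤ D / 4
    · exact csInf_le hVfin.bddBelow (Set.mem_insert_of_mem _ ⟨p, ⟨hmem, hne, h⟩, rfl⟩)
    · exact (csInf_le hVfin.bddBelow (Set.mem_insert _ _)).trans (le_of_not_ge h)
  set L : ℝ := max (1 / D) (1 / (2 * m')) with hLdef
  have hL : 0 < L := lt_of_lt_of_le (by positivity) (le_max_left _ _)
  have hLD : 1 ≤ L * D := by
    have h := le_max_left (1 / D) (1 / (2 * m'))
    rw [← hLdef] at h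
    have := mul_le_mul_of_nonneg_right h hD.le
    rwa [one_div_mul_cancel hD.ne'] at this
  have hLm : 1 / 2 ≤ L * m' := by
    have h := le_max_right (1 / D) (1 / (2 * m'))
    rw [← hLdef] at h
    have e : 1 / (2 * m') * (2 * m') = 1 := one_div_mul_cancel (by positivity)
    nlinarith [mul_le_mul_of_nonneg_right h (by positivity : (0:ℝ) ≤ 2 * m')]
  set η : ℝ := 1 / (2 * L) with hηdef
  have hη : 0 < η := by positivity
  have hLη : L * η = 1 / 2 := by
    rw [hηdef, mul_one_div, div_eq_div_iff (by positivity : (2*L:ℝ) ≠ 0) (by norm_num : (2:ℝ) ≠ 0)]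
    ring
  set P : Set (X × X) :=
    {p : X × X | {p.1, p.2} ∈ 𝒞 ∧ ({p.1, p.2} : Set X) ≠ {a, b} ∧ η ≤ dist p.1 p.2}
    with hPdef
  have hPfin : P.Finite := by
    refine (pairs_finite 𝒞 h2 hnull hη).subset ?_
    rintro ⟨x, y⟩ ⟨hmem, _, hle⟩
    exact ⟨hmem, hle⟩
  set G : X → Set ℝ := fun x =>
    insert 1 (insert (L * dist a x)
      ((fun p : X × X => 1 / 2 + L * dist a p.1 + L * dist p.2 x) '' P)) with hGdef
  have hGfin : ∀ x, (G x).Finite := fun x => ((hPfin.image _).insert _).insert _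
  have hGne : ∀ x, (G x).Nonempty := fun x => ⟨1, Set.mem_insert _ _⟩
  have hGnonneg : ∀ x, ∀ r ∈ G x, (0:ℝ) ≤ r := by
    intro x r hr
    rcases Set.mem_insert_iff.1 hr with h | h'
    · rw [h]; norm_num
    rcases Set.mem_insert_iff.1 h' with h | ⟨p, _, hpe⟩
    · rw [h]; positivity
    · rw [← hpe]; positivity
  set f : X → ℝ := fun x => sInf (G x) with hfdef
  have hfle : ∀ x, ∀ r ∈ G x, f x ≤ r := fun x r hr => csInf_le (hGfin x).bddBelow hr
  have hf0 : ∀ x, 0 ≤ f x := fun x => le_csInf (hGne x) (hGnonneg x)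
  have hf1 : ∀ x, f x ≤ 1 := fun x => hfle x 1 (Set.mem_insert _ _)
  have hfa : f a = 0 := by
    refine le_antisymm ?_ (hf0 a)
    have := hfle a (L * dist a a) (Set.mem_insert_of_mem _ (Set.mem_insert _ _))
    simpa using this
  have hfmem : ∀ x, f x ∈ G x := fun x => (hGne x).csInf_mem (hGfin x)
  have hfb : f b = 1 := by
    refine le_antisymm (hf1 b) (le_csInf (hGne b) ?_)
    intro r hr
    rcases Set.mem_insert_iff.1 hr with h | h'
    · rw [h]
    rcases Set.mem_insert_iff.1 h' with h | ⟨p, hp, hpe⟩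
    · rw [h, ← hDdef]; exact hLD
    · rw [← hpe]
      have h1 := hm'key p hp.1 hp.2.1
      have h2' := mul_le_mul_of_nonneg_left h1 hL.le
      rw [mul_add] at h2'
      linarith
  have hlip1 : ∀ x y, f x ≤ f y + L * dist x y := by
    intro x y
    have hmem := hfmem y
    rcases Set.mem_insert_iff.1 hmem with h | h'
    · have := hf1 x
      have h2' : (0:ℝ) ≤ L * dist x y := by positivity
      linarith
    rcases Set.mem_insert_iff.1 h' with h | ⟨p, hp, hpe⟩
    · have h1 : f x ≤ L * dist a x := hfle x _ (Set.mem_insert_of_mem _ (Set.mem_insert _ _))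
      have h2' := dist_triangle a y x
      have h3 := dist_comm y x
      nlinarith [hL.le]
    · have h1 : f x ≤ 1 / 2 + L * dist a p.1 + L * dist p.2 x :=
        hfle x _ (Set.mem_insert_of_mem _ (Set.mem_insert_of_mem _ ⟨p, hp, rfl⟩))
      have h2' := dist_triangle p.2 y x
      have h3 := dist_comm y x
      nlinarith [hL.le]
  have hlip : ∀ x y, |f x - f y| ≤ L * dist x y := by
    intro x y
    rw [abs_sub_le_iff]
    constructor
    · linarith [hlip1 x y]
    · have := hlip1 y x
      rw [dist_comm] at this
      linarith
  refine ⟨f, L, hL, fun x => ⟨hf0 x, hf1 x⟩, hfa, hfb, hlip, ?_⟩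
  intro x y hmem hne
  by_cases hd : dist x y < η
  · refine (hlip x y).trans ?_
    have := mul_le_mul_of_nonneg_left hd.le hL.le
    rw [hLη] at this
    exact this
  · have hxy : (x, y) ∈ P := ⟨hmem, hne, le_of_not_gt hd⟩
    have hyx : (y, x) ∈ P := by
      refine ⟨?_, ?_, ?_⟩
      · rwa [Set.pair_comm]
      · rwa [Set.pair_comm]
      · rw [dist_comm]; exact le_of_not_gt hd
    have key : ∀ u v : X, (v, u) ∈ P → f u ≤ f v + 1 / 2 := by
      intro u v hvu
      have hmemInf := hfmem v
      rcases Set.mem_insert_iff.1 hmemInf with h | h'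
      · have := hf1 u
        linarith
      rcases Set.mem_insert_iff.1 h' with h | ⟨p, _, hpe⟩
      · have h1 : f u ≤ 1 / 2 + L * dist a v + L * dist u u :=
          hfle u _ (Set.mem_insert_of_mem _ (Set.mem_insert_of_mem _ ⟨(v, u), hvu, rfl⟩))
        rw [dist_self, mul_zero, add_zero] at h1
        linarith
      · have h1 : (1:ℝ) / 2 ≤ f v := by
          rw [← hpe]
          have e1 := mul_nonneg hL.le (dist_nonneg (x := a) (y := p.1))
          have e2 := mul_nonneg hL.le (dist_nonneg (x := p.2) (y := v))
          linarith
        have := hf1 u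
        linarith
    have h1 := key x y hyx
    have h2' := key y x hxy
    rw [abs_sub_le_iff]
    exact ⟨by linarith, by linarith⟩

private lemma exists_d {X : Type*} [MetricSpace X] (𝒞 : Set (Set X))
    (h2 : ∀ C ∈ 𝒞, C.ncard = 2)
    (hnull : ∀ ε > (0:ℝ), {C | C ∈ 𝒞 ∧ ε ≤ Metric.diam C}.Finite)
    (a b : X) (hab : a ≠ b) (K : ℝ) (hK : 0 < K) :
    ∃ d' : X → X → ℝ,
      (∀ x, d' x x = 0) ∧ (∀ x y, d' x y = d' y x) ∧
      (∀ x y z, d' x z ≤ d' x y + d' y z) ∧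
      (∀ x y, d' x y = 0 → x = y) ∧
      (∃ c > 0, ∀ x y, d' x y ≤ c * dist x y) ∧
      (∀ x y, d' x y < K / 4 → dist x y ≤ d' x y) ∧
      d' a b = K ∧ (∀ x y, d' x y ≤ K) ∧
      (∀ x y, ({x, y} : Set X) ∈ 𝒞 → ({x, y} : Set X) ≠ {a, b} → d' x y ≤ K / 2) := by
  obtain ⟨f, L, hL, hf01, hfa, hfb, hlip, hhalf⟩ := exists_f 𝒞 h2 hnull a b hab
  refine ⟨fun x y => max (min (dist x y) (K / 2)) (K * |f x - f y|),
    ?_, ?_, ?_, ?_, ?_, ?_, ?_, ?_, ?_⟩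
  · intro x
    beta_reduce
    rw [dist_self, sub_self, abs_zero, mul_zero, min_eq_left (by positivity), max_self]
  · intro x y
    beta_reduce
    rw [dist_comm, abs_sub_comm]
  · intro x y z
    apply max_le
    · calc min (dist x z) (K / 2)
          ≤ min (dist x y) (K / 2) + min (dist y z) (K / 2) := by
            simp only [min_def]
            split_ifs <;>
              linarith [dist_triangle x y z, dist_nonneg (x := x) (y := y),
                dist_nonneg (x := y) (y := z)]
        _ ≤ _ := add_le_add (le_max_left _ _) (le_max_left _ _)
    · calc K * |f x - f z| ≤ K * (|f x - f y| + |f y - f z|) := by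
            have := abs_sub_le (f x) (f y) (f z)
            nlinarith
        _ = K * |f x - f y| + K * |f y - f z| := by ring
        _ ≤ _ := add_le_add (le_max_right _ _) (le_max_right _ _)
  · intro x y h
    have h1 : min (dist x y) (K / 2) ≤ 0 := h ▸ le_max_left _ _
    rcases le_total (dist x y) (K / 2) with h2' | h2'
    · rw [min_eq_left h2'] at h1
      exact dist_le_zero.1 h1
    · rw [min_eq_right h2'] at h1
      linarith
  · refine ⟨1 + L * K, by positivity, ?_⟩
    intro x y
    apply max_le
    · have h1 := min_le_left (dist x y) (K / 2)
      have h2' : 0 ≤ L * K * dist x y :=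
        mul_nonneg (mul_nonneg hL.le hK.le) dist_nonneg
      nlinarith
    · have := mul_le_mul_of_nonneg_left (hlip x y) hK.le
      nlinarith [dist_nonneg (x := x) (y := y)]
  · intro x y h
    beta_reduce at h ⊢
    have h1 : min (dist x y) (K / 2) < K / 4 := lt_of_le_of_lt (le_max_left _ _) h
    rcases le_total (dist x y) (K / 2) with h2' | h2'
    · rw [min_eq_left h2'] at h1 ⊢
      exact le_max_left _ _
    · rw [min_eq_right h2'] at h1
      linarith
  · beta_reduce
    rw [hfa, hfb, show |(0:ℝ) - 1| = 1 by norm_num, mul_one]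
    exact max_eq_right ((min_le_right _ _).trans (by linarith))
  · intro x y
    apply max_le
    · exact (min_le_right _ _).trans (by linarith)
    · have h1 : |f x - f y| ≤ 1 := by
        rw [abs_sub_le_iff]
        constructor <;> linarith [(hf01 x).1, (hf01 x).2, (hf01 y).1, (hf01 y).2]
      nlinarith
  · intro x y hmem hne
    apply max_le
    · exact min_le_right _ _
    · have := mul_le_mul_of_nonneg_left (hhalf x y hmem hne) hK.le
      linarith

private lemma diam_univ_eq {Y : Type*} [MetricSpace Y] {K : ℝ} (hK : 0 ≤ K) (a b : Y)
    (h1 : dist a b = K) (hall : ∀ x y : Y, dist x y ≤ K) :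
    Metric.diam (Set.univ : Set Y) = K := by
  refine le_antisymm (Metric.diam_le_of_forall_dist_le hK (fun x _ y _ => hall x y)) ?_
  rw [← h1]
  exact Metric.dist_le_diam_of_mem
    (Metric.isBounded_iff.2 ⟨K, fun x _ y _ => hall x y⟩) trivial trivial

theorem stmt1 {X : Type*} [TopologicalSpace X] [CompactSpace X]
    (m₀ : MetricSpace X)
    (hm₀ : m₀.toUniformSpace.toTopologicalSpace = ‹TopologicalSpace X›)
    (𝒞 : Set (Set X)) (h2 : ∀ C ∈ 𝒞, C.ncard = 2)
    (hnull : ∀ ε > (0 : ℝ),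
      {C | C ∈ 𝒞 ∧ ε ≤ @Metric.diam X m₀.toPseudoMetricSpace C}.Finite)
    (a b : X) (hab : a ≠ b) (hC₀ : ({a, b} : Set X) ∈ 𝒞)
    (K : ℝ) (hK : 0 < K) :
    ∃ m : MetricSpace X,
      m.toUniformSpace.toTopologicalSpace = ‹TopologicalSpace X› ∧
      @Metric.diam X m.toPseudoMetricSpace Set.univ = K ∧
      @dist X m.toPseudoMetricSpace.toDist a b = K ∧
      ∀ C ∈ 𝒞, C ≠ ({a, b} : Set X) →
        @Metric.diam X m.toPseudoMetricSpace C ≤ K / 2 := by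
  obtain ⟨d', hself, hsymm, htri, heqz, ⟨c, hc, hupper⟩, hlower, hdab, hdK, hdpair⟩ :=
    @exists_d X m₀ 𝒞 h2 hnull a b hab K hK
  have H : ∀ s : Set X, IsOpen s ↔ ∀ x ∈ s, ∃ ε > 0, ∀ y, d' x y < ε → y ∈ s := by
    intro s
    rw [← hm₀, @Metric.isOpen_iff X m₀.toPseudoMetricSpace s]
    constructor
    · intro h x hx
      obtain ⟨ε, hε, hball⟩ := h x hx
      refine ⟨min ε (K / 4), by positivity, ?_⟩
      intro y hy
      apply hball
      have h4 : d' x y < K / 4 := lt_of_lt_of_le hy (min_le_right _ _)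
      have h5 := hlower x y h4
      have h6 : @dist X m₀.toPseudoMetricSpace.toDist x y < ε :=
        lt_of_le_of_lt h5 (lt_of_lt_of_le hy (min_le_left _ _))
      rw [@Metric.mem_ball X m₀.toPseudoMetricSpace x y ε,
        @dist_comm X m₀.toPseudoMetricSpace y x]
      exact h6
    · intro h x hx
      obtain ⟨ε, hε, hd⟩ := h x hx
      refine ⟨ε / c, by positivity, ?_⟩
      intro y hy
      apply hd
      rw [@Metric.mem_ball X m₀.toPseudoMetricSpace x y (ε / c),
        @dist_comm X m₀.toPseudoMetricSpace y x] at hy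
      calc d' x y ≤ c * @dist X m₀.toPseudoMetricSpace.toDist x y := hupper x y
        _ < c * (ε / c) := by
            exact mul_lt_mul_of_pos_left hy hc
        _ = ε := by field_simp
  refine ⟨MetricSpace.ofDistTopology d' hself hsymm htri H heqz, rfl, ?_, ?_, ?_⟩
  · exact @diam_univ_eq X (MetricSpace.ofDistTopology d' hself hsymm htri H heqz)
      K hK.le a b hdab (fun x y => hdK x y)
  · exact hdab
  · intro C hC hne
    obtain ⟨x, y, hxy, rfl⟩ := Set.ncard_eq_two.1 (h2 C hC)
    rw [@Metric.diam_pair X x y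
      (MetricSpace.ofDistTopology d' hself hsymm htri H heqz).toPseudoMetricSpace]
    exact hdpair x y hC hne
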